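/- arXiv:1108.6279 — 5 statements merged into one kernel-verified Lean document; each statement's English description precedes it below -/
import Mathlib

section
/- Let Γ be a group and define a relation on the set S of infinite virtually cyclic subgroups of Γ by H ∼ K iff H ∩ K is infinite. Then ∼ is an equivalence relation on S. -/
def VirtuallyCyclic (G : Type*) [Group G] : Prop :=
  ∃ C : Subgroup G, IsCyclic C ∧ C.FiniteIndex

private lemma not_finOrder_zpow {G : Type*} [Group G] {g : G} (hg : ¬ IsOfFinOrder g)
    {m : ℤ} (hm : m ≠ 0) : ¬ IsOfFinOrder (g ^ m) := by
  intro h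
  rcases isOfFinOrder_iff_zpow_eq_one.1 h with ⟨n, hn, hpow⟩
  exact hg (isOfFinOrder_iff_zpow_eq_one.2 ⟨m * n, mul_ne_zero hm hn, by
    rwa [zpow_mul]⟩)

private lemma infinite_of_mem_not_finOrder {G : Type*} [Group G] {A : Subgroup G} {c : G}
    (hc : c ∈ A) (h : ¬ IsOfFinOrder c) : Infinite A := by
  refine Infinite.of_injective (fun n : ℤ => (⟨c ^ n, A.zpow_mem hc n⟩ : A)) ?_
  intro a b hab
  simp only [Subtype.mk.injEq] at hab
  by_contra hne
  exact h (isOfFinOrder_iff_zpow_eq_one.2 ⟨a - b, sub_ne_zero.2 hne, by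
    rw [zpow_sub, hab, mul_inv_cancel]⟩)

/-- In an infinite cyclic group, any two infinite (indeed nontrivial) subgroups have
infinite intersection. -/
private lemma zkey {G : Type*} [Group G] [Infinite G] (hc : IsCyclic G)
    (A B : Subgroup G) [Infinite A] [Infinite B] : Infinite ↥(A ⊓ B) := by
  obtain ⟨g, hg⟩ := hc.exists_generator
  have hgfin : ¬ IsOfFinOrder g := by
    intro h
    have : (Subgroup.zpowers g : Set G).Finite := h.finite_zpowers
    have : (Set.univ : Set G).Finite := by
      refine this.subset fun x _ => hg x
    exact Set.infinite_univ this
  obtain ⟨a, ha⟩ := exists_ne (1 : A)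
  obtain ⟨b, hb⟩ := exists_ne (1 : B)
  obtain ⟨m, hm⟩ := hg (a : G)
  obtain ⟨n, hn⟩ := hg (b : G)
  have hm0 : m ≠ 0 := by
    rintro rfl
    exact ha (Subtype.ext (by simpa using hm.symm))
  have hn0 : n ≠ 0 := by
    rintro rfl
    exact hb (Subtype.ext (by simpa using hn.symm))
  simp only at hm hn
  have hmemA : g ^ (m * n) ∈ A := by
    rw [zpow_mul, hm]
    exact A.zpow_mem a.2 n
  have hmemB : g ^ (m * n) ∈ B := by
    rw [mul_comm, zpow_mul, hn]
    exact B.zpow_mem b.2 m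
  exact infinite_of_mem_not_finOrder (A := A ⊓ B) ⟨hmemA, hmemB⟩
    (not_finOrder_zpow hgfin (mul_ne_zero hm0 hn0))

/-- In an infinite virtually cyclic group, any two infinite subgroups have infinite
intersection. -/
private lemma key {K : Type*} [Group K] [Infinite K] (hvc : VirtuallyCyclic K)
    (A B : Subgroup K) (hA : Infinite A) (hB : Infinite B) : Infinite ↥(A ⊓ B) := by
  haveI := hA; haveI := hB
  obtain ⟨C, hCcyc, hCfi⟩ := hvc
  haveI := hCfi
  haveI : Infinite C := by
    by_contra hfin
    rw [not_infinite_iff_finite] at hfin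
    haveI := hfin
    haveI : Finite (K ⧸ C) := Subgroup.finite_quotient_of_finiteIndex
    haveI : Finite K := Finite.of_equiv _ (Subgroup.groupEquivQuotientProdSubgroup (s := C)).symm
    exact not_finite K
  -- C.subgroupOf A has finite index in A, hence is infinite
  haveI : (C.subgroupOf A).FiniteIndex := Subgroup.instFiniteIndex_subgroupOf C A
  haveI hDA : Infinite (C.subgroupOf A) := by
    by_contra hfin
    rw [not_infinite_iff_finite] at hfin
    haveI := hfin
    haveI : Finite (A ⧸ C.subgroupOf A) := Subgroup.finite_quotient_of_finiteIndex
    haveI : Finite A := Finite.of_equiv _ (Subgroup.groupEquivQuotientProdSubgroup (s := C.subgroupOf A)).symm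
    exact not_finite A
  haveI : (C.subgroupOf B).FiniteIndex := Subgroup.instFiniteIndex_subgroupOf C B
  haveI hDB : Infinite (C.subgroupOf B) := by
    by_contra hfin
    rw [not_infinite_iff_finite] at hfin
    haveI := hfin
    haveI : Finite (B ⧸ C.subgroupOf B) := Subgroup.finite_quotient_of_finiteIndex
    haveI : Finite B := Finite.of_equiv _ (Subgroup.groupEquivQuotientProdSubgroup (s := C.subgroupOf B)).symm
    exact not_finite B
  -- transfer to subgroups of C
  haveI : Infinite (A.subgroupOf C) := by
    refine Infinite.of_injective
      (fun x : C.subgroupOf A => (⟨⟨(x : A), x.2⟩, (x : A).2⟩ : A.subgroupOf C)) ?_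
    intro x y hxy
    simp only [Subtype.mk.injEq] at hxy
    exact Subtype.ext (Subtype.ext (by have h := congrArg Subtype.val (congrArg Subtype.val hxy); exact h))
  haveI : Infinite (B.subgroupOf C) := by
    refine Infinite.of_injective
      (fun x : C.subgroupOf B => (⟨⟨(x : B), x.2⟩, (x : B).2⟩ : B.subgroupOf C)) ?_
    intro x y hxy
    simp only [Subtype.mk.injEq] at hxy
    exact Subtype.ext (Subtype.ext (by have h := congrArg Subtype.val (congrArg Subtype.val hxy); exact h))
  haveI := zkey hCcyc (A.subgroupOf C) (B.subgroupOf C)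
  refine Infinite.of_injective
    (fun x : ↥(A.subgroupOf C ⊓ B.subgroupOf C) =>
      (⟨((x : C) : K), x.2.1, x.2.2⟩ : ↥(A ⊓ B))) ?_
  intro x y hxy
  simp only [Subtype.mk.injEq] at hxy
  exact Subtype.ext (Subtype.ext (by have h := congrArg Subtype.val hxy; exact h))

theorem stmt4 {Γ : Type*} [Group Γ] :
    Equivalence (fun (H K : {L : Subgroup Γ // Infinite L ∧ VirtuallyCyclic L}) =>
      Infinite ↥(H.1 ⊓ K.1)) := by
  constructor
  · intro H
    rw [inf_idem]
    exact H.2.1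
  · intro H K h
    rw [inf_comm]
    exact h
  · intro H K L hHK hKL
    haveI : Infinite K.1 := K.2.1
    -- Work inside the group K.1
    haveI h1 : Infinite ((H.1 ⊓ K.1).subgroupOf K.1) :=
      Infinite.of_injective (Subgroup.subgroupOfEquivOfLe inf_le_right).symm.toEquiv
        (Equiv.injective _)
    haveI h2 : Infinite ((L.1 ⊓ K.1).subgroupOf K.1) := by
      haveI : Infinite ↥(L.1 ⊓ K.1) := by rw [inf_comm]; exact hKL
      exact Infinite.of_injective (Subgroup.subgroupOfEquivOfLe inf_le_right).symm.toEquiv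
        (Equiv.injective _)
    haveI := key K.2.2 ((H.1 ⊓ K.1).subgroupOf K.1) ((L.1 ⊓ K.1).subgroupOf K.1) h1 h2
    refine Infinite.of_injective
      (fun x : ↥((H.1 ⊓ K.1).subgroupOf K.1 ⊓ (L.1 ⊓ K.1).subgroupOf K.1) =>
        (⟨((x : K.1) : Γ), x.2.1.1, x.2.2.1⟩ : ↥(H.1 ⊓ L.1))) ?_
    intro x y hxy
    simp only [Subtype.mk.injEq] at hxy
    exact Subtype.ext (Subtype.ext (by have h := congrArg Subtype.val hxy; exact h))
end

section
/- Let Γ be a group and let H and K be infinite virtually cyclic subgroups of Γ with H ∩ K infinite. Then Comm_Γ(H) = Comm_Γ(K). -/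
def conjSub {Γ : Type*} [Group Γ] (x : Γ) (H : Subgroup Γ) : Subgroup Γ :=
  H.map (MulAut.conj x⁻¹).toMonoidHom

def commSet {Γ : Type*} [Group Γ] (H : Subgroup Γ) : Set Γ :=
  {x | Infinite ↥(H ⊓ conjSub x H)}

/- ## Auxiliary lemmas -/

lemma aux_infinite_of_index_ne_zero {G : Type*} [Group G] [Infinite G] {A : Subgroup G}
    (h : A.index ≠ 0) : Infinite A := by
  by_contra hfin
  rw [not_infinite_iff_finite] at hfin
  have h1 := A.card_mul_index
  have h2 : Nat.card G = 0 := Nat.card_eq_zero_of_infinite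
  have h3 : Nat.card A ≠ 0 := Nat.card_ne_zero.mpr ⟨⟨1⟩, hfin⟩
  exact h ((Nat.mul_eq_zero.mp (h1.trans h2)).resolve_left h3)

lemma aux_infinite_mono {G : Type*} [Group G] {A B : Subgroup G} (h : A ≤ B)
    (hA : Infinite A) : Infinite B :=
  Infinite.of_injective (Subgroup.inclusion h) (Subgroup.inclusion_injective h)

lemma aux_inf_subgroupOf {G : Type*} [Group G] {A B : Subgroup G} (h : A ≤ B) :
    Infinite (A.subgroupOf B) ↔ Infinite A :=
  (Subgroup.subgroupOfEquivOfLe h).toEquiv.infinite_iff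

lemma aux_int_index (A : AddSubgroup ℤ) (h : Infinite A) : A.index ≠ 0 := by
  obtain ⟨a, ha⟩ := Int.subgroup_cyclic A
  have hz : A = AddSubgroup.zmultiples a := by
    rw [ha, AddSubgroup.zmultiples_eq_closure]
  have ha0 : a ≠ 0 := by
    rintro rfl
    rw [hz] at h
    have hb : AddSubgroup.zmultiples (0 : ℤ) = ⊥ := by
      ext x; simp [AddSubgroup.mem_zmultiples_iff]
    rw [hb] at h
    exact (not_infinite_iff_finite.mpr inferInstance) h
  rw [hz, Int.index_zmultiples]
  simpa using ha0

lemma aux_cyclic_index {G : Type*} [Group G] [IsCyclic G] (A : Subgroup G)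
    (h : Infinite A) : A.index ≠ 0 := by
  obtain ⟨g, hg⟩ := IsCyclic.exists_generator (α := G)
  set φ : Multiplicative ℤ →* G := zpowersHom G g with hφ
  have hsurj : Function.Surjective φ := by
    intro x
    obtain ⟨n, hn⟩ := hg x
    exact ⟨Multiplicative.ofAdd n, hn⟩
  have hcomap : (A.comap φ).index = A.index := Subgroup.index_comap_of_surjective _ hsurj
  have hpre : Infinite (A.comap φ) := by
    have hA : (A : Set G).Infinite := (Set.infinite_coe_iff (s := (A : Set G))).mp h
    have hp : (φ ⁻¹' (A : Set G)).Infinite :=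
      hA.preimage (by rw [hsurj.range_eq]; exact Set.subset_univ _)
    exact Set.infinite_coe_iff.mpr hp
  have hadd : Infinite (Subgroup.toAddSubgroup (A.comap φ)) :=
    Infinite.of_injective
      (fun x : (A.comap φ) => (⟨Additive.ofMul (x : Multiplicative ℤ), x.2⟩ :
        Subgroup.toAddSubgroup (A.comap φ)))
      (fun x y hxy => by
        apply Subtype.ext
        simpa using congrArg Subtype.val hxy)
  have hfin := aux_int_index (Subgroup.toAddSubgroup (A.comap φ)) hadd
  rw [← hcomap]
  exact hfin

/-- In an infinite virtually cyclic group, every infinite subgroup has index ≠ 0. -/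
lemma aux_vc_index {G : Type*} [Group G] [Infinite G] (hG : VirtuallyCyclic G)
    {A : Subgroup G} (hA : Infinite A) : A.index ≠ 0 := by
  obtain ⟨C, hCcyc, hCfin⟩ := hG
  have h1 : (C.subgroupOf A).index ≠ 0 :=
    (Subgroup.instFiniteIndex_subgroupOf C A).index_ne_zero
  have h2 : Infinite (C.subgroupOf A) := aux_infinite_of_index_ne_zero h1
  have e1 : (C ⊓ A).subgroupOf A = C.subgroupOf A := Subgroup.inf_subgroupOf_right C A
  rw [← e1] at h2
  have h3 : Infinite ((C ⊓ A) : Subgroup G) := (aux_inf_subgroupOf inf_le_right).mp h2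
  have h4 : Infinite ((C ⊓ A).subgroupOf C) := (aux_inf_subgroupOf inf_le_left).mpr h3
  have h5 : ((C ⊓ A).subgroupOf C).index ≠ 0 := aux_cyclic_index _ h4
  have h6 : (C ⊓ A).index ≠ 0 := by
    have hm := Subgroup.relIndex_mul_index (inf_le_left : C ⊓ A ≤ C)
    have : (C ⊓ A).relIndex C ≠ 0 := h5
    rw [← hm]
    exact mul_ne_zero this hCfin.index_ne_zero
  intro h0
  obtain ⟨k, hk⟩ := Subgroup.index_dvd_of_le (inf_le_right : C ⊓ A ≤ A)
  rw [hk, h0, zero_mul] at h6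
  exact h6 rfl

/-- Transitivity of commensurability through an infinite virtually cyclic middle subgroup. -/
lemma aux_trans {Γ : Type*} [Group Γ] (M A B : Subgroup Γ) [Infinite M]
    (hM : VirtuallyCyclic M) (hA : Infinite ((A ⊓ M) : Subgroup Γ))
    (hB : Infinite ((B ⊓ M) : Subgroup Γ)) : Infinite ((A ⊓ B) : Subgroup Γ) := by
  have hA' : Infinite ((A ⊓ M).subgroupOf M) := (aux_inf_subgroupOf inf_le_right).mpr hA
  have hB' : Infinite ((B ⊓ M).subgroupOf M) := (aux_inf_subgroupOf inf_le_right).mpr hB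
  have iA : ((A ⊓ M).subgroupOf M).index ≠ 0 := aux_vc_index hM hA'
  have iB : ((B ⊓ M).subgroupOf M).index ≠ 0 := aux_vc_index hM hB'
  have iAB : (((A ⊓ M).subgroupOf M) ⊓ ((B ⊓ M).subgroupOf M)).index ≠ 0 :=
    Subgroup.index_inf_ne_zero iA iB
  have h7 : Infinite ((((A ⊓ M).subgroupOf M) ⊓ ((B ⊓ M).subgroupOf M)) : Subgroup M) :=
    aux_infinite_of_index_ne_zero iAB
  have e : ((A ⊓ M).subgroupOf M) ⊓ ((B ⊓ M).subgroupOf M) = (A ⊓ B ⊓ M).subgroupOf M := by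
    ext y
    simp only [Subgroup.mem_inf, Subgroup.mem_subgroupOf, Subgroup.mem_inf]
    have : (y : Γ) ∈ M := y.2
    tauto
  rw [e] at h7
  have h8 : Infinite ((A ⊓ B ⊓ M) : Subgroup Γ) := (aux_inf_subgroupOf inf_le_right).mp h7
  exact aux_infinite_mono inf_le_left h8

lemma aux_conj_infinite {Γ : Type*} [Group Γ] (x : Γ) (H : Subgroup Γ)
    (h : Infinite H) : Infinite (conjSub x H) :=
  Infinite.of_injective (MulEquiv.subgroupMap (MulAut.conj x⁻¹ : Γ ≃* Γ) H)
    (MulEquiv.subgroupMap (MulAut.conj x⁻¹ : Γ ≃* Γ) H).injective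

lemma aux_conj_inf {Γ : Type*} [Group Γ] (x : Γ) (A B : Subgroup Γ) :
    conjSub x (A ⊓ B) = conjSub x A ⊓ conjSub x B :=
  Subgroup.map_inf A B _ (MulAut.conj x⁻¹ : Γ ≃* Γ).injective

lemma aux_vc_equiv {G G' : Type*} [Group G] [Group G'] (e : G ≃* G')
    (h : VirtuallyCyclic G) : VirtuallyCyclic G' := by
  obtain ⟨C, hCcyc, hCfin⟩ := h
  refine ⟨C.map e.toMonoidHom, ?_, ?_⟩
  · exact isCyclic_of_surjective (MulEquiv.subgroupMap e C)
      (MulEquiv.subgroupMap e C).surjective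
  · constructor
    rw [Subgroup.index_map_eq _ e.surjective
      (by rw [(MonoidHom.ker_eq_bot_iff e.toMonoidHom).mpr e.injective]; exact bot_le)]
    exact hCfin.index_ne_zero

lemma aux_conj_vc {Γ : Type*} [Group Γ] (x : Γ) (H : Subgroup Γ)
    (h : VirtuallyCyclic H) : VirtuallyCyclic (conjSub x H) :=
  aux_vc_equiv (MulEquiv.subgroupMap (MulAut.conj x⁻¹ : Γ ≃* Γ) H) h

lemma aux_subset {Γ : Type*} [Group Γ] (H K : Subgroup Γ) [Infinite H] [Infinite K]
    (hH : VirtuallyCyclic H) (hHK : Infinite ↥(H ⊓ K)) :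
    commSet H ⊆ commSet K := by
  intro x hx
  have hx' : Infinite ↥(conjSub x H ⊓ H) := by
    rw [inf_comm]; exact hx
  have hKH : Infinite ↥(K ⊓ H) := by rwa [inf_comm] at hHK
  have s1 : Infinite ↥(K ⊓ conjSub x H) := aux_trans H K (conjSub x H) hH hKH hx'
  have s2 : Infinite ↥(conjSub x H ⊓ conjSub x K) := by
    rw [← aux_conj_inf]
    exact aux_conj_infinite x (H ⊓ K) hHK
  haveI : Infinite (conjSub x H) := aux_conj_infinite x H inferInstance
  have s3 : Infinite ↥(K ⊓ conjSub x K) :=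
    aux_trans (conjSub x H) K (conjSub x K) (aux_conj_vc x H hH) s1
      (by rwa [inf_comm] at s2)
  exact s3

theorem stmt7 {Γ : Type*} [Group Γ] (H K : Subgroup Γ) [Infinite H] [Infinite K]
    (hH : VirtuallyCyclic H) (hK : VirtuallyCyclic K)
    (hHK : Infinite ↥(H ⊓ K)) :
    commSet H = commSet K :=
  Set.Subset.antisymm (aux_subset H K hH hHK)
    (aux_subset K H hK (by rwa [inf_comm] at hHK))
end

section
/- Let Γ = G ⋊_φ ℤ with G torsion, and let K = ⟨(a, t^k)⟩ with k ≥ 1. Then G ∩ Comm_Γ(K) = {g ∈ G : ∃ n ≥ 1, φ^{nk}(g) = α_{n,k}⁻¹ g α_{n,k}}, where α_{n,k} = ∏_{i=0}^{n-1} φ^{ik}(a). -/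
section Aux

variable {G : Type*} [Group G] (φ : MulAut G) (a : G) (k : ℕ)

local notation "Γ" => G ⋊[zpowersHom (MulAut G) φ] Multiplicative ℤ

private def xel : Γ := ⟨a, Multiplicative.ofAdd (k : ℤ)⟩

private lemma xel_pow (n : ℕ) :
    (xel φ a k) ^ n =
      (⟨((List.range n).map fun i => (φ ^ (i * k)) a).prod,
        Multiplicative.ofAdd ((n * k : ℕ) : ℤ)⟩ : Γ) := by
  induction n with
  | zero =>
    ext
    · simp only [pow_zero, SemidirectProduct.one_left, List.range_zero, List.map_nil,
        List.prod_nil]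
    · simp only [pow_zero, SemidirectProduct.one_right, Nat.zero_mul, Nat.cast_zero,
        ofAdd_zero]
  | succ n ih =>
    rw [pow_succ, ih]
    show ((⟨_, _⟩ : Γ) * ⟨a, Multiplicative.ofAdd (k : ℤ)⟩) = _
    ext
    · rw [SemidirectProduct.mul_left]
      simp only [zpowersHom_apply, toAdd_ofAdd, List.range_succ, List.map_append,
        List.prod_append, List.map_singleton, List.prod_singleton]
      rw [← zpow_natCast φ (n * k)]
    · rw [SemidirectProduct.mul_right]
      show Multiplicative.ofAdd ((n * k : ℕ) : ℤ) * Multiplicative.ofAdd ((k : ℕ) : ℤ) = _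
      rw [← ofAdd_add]
      show Multiplicative.ofAdd (((n * k : ℕ) : ℤ) + ((k : ℕ) : ℤ)) =
        Multiplicative.ofAdd ((((n + 1) * k : ℕ)) : ℤ)
      refine congrArg Multiplicative.ofAdd ?_
      push_cast
      ring

private lemma xel_right (m : ℤ) :
    ((xel φ a k) ^ m).right = Multiplicative.ofAdd (m * k) := by
  have h1 : ((xel φ a k) ^ m).right = (SemidirectProduct.rightHom ((xel φ a k) ^ m)) := rfl
  rw [h1, map_zpow]
  have h2 : SemidirectProduct.rightHom (xel φ a k) = Multiplicative.ofAdd (k : ℤ) := rfl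
  rw [h2, ← ofAdd_zsmul, smul_eq_mul]

private lemma xel_commute_iff (g : G) (n : ℕ) :
    Commute (SemidirectProduct.inl g) ((xel φ a k) ^ n) ↔
      (φ ^ (n * k)) g =
        (((List.range n).map fun i => (φ ^ (i * k)) a).prod)⁻¹ * g *
          (((List.range n).map fun i => (φ ^ (i * k)) a).prod) := by
  rw [Commute, SemiconjBy, xel_pow]
  have hinl : (SemidirectProduct.inl g : Γ) = ⟨g, 1⟩ := rfl
  rw [hinl, SemidirectProduct.ext_iff]
  rw [SemidirectProduct.mul_left, SemidirectProduct.mul_left,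
    SemidirectProduct.mul_right, SemidirectProduct.mul_right]
  simp only [zpowersHom_apply, toAdd_ofAdd, toAdd_one, zpow_zero, MulAut.one_apply,
    one_mul, mul_one]
  have hphi : (φ ^ ((n * k : ℕ) : ℤ)) g = (φ ^ (n * k)) g := by
    rw [zpow_natCast]
  rw [hphi]
  constructor
  · rintro ⟨h, -⟩
    rw [mul_assoc, h, ← mul_assoc, inv_mul_cancel, one_mul]
  · intro h
    refine ⟨?_, trivial⟩
    rw [h, ← mul_assoc, ← mul_assoc, mul_inv_cancel, one_mul]

end Aux

theorem stmt10 {G : Type*} [Group G] (hG : Monoid.IsTorsion G) (φ : MulAut G)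
    (a : G) (k : ℕ) (hk : 1 ≤ k) :
    ∀ g : G,
      (SemidirectProduct.inl g ∈
        commSet (Subgroup.zpowers
          (⟨a, Multiplicative.ofAdd (k : ℤ)⟩ :
            G ⋊[zpowersHom (MulAut G) φ] Multiplicative ℤ))) ↔
      ∃ n : ℕ, 1 ≤ n ∧
        (φ ^ (n * k)) g =
          (((List.range n).map fun i => (φ ^ (i * k)) a).prod)⁻¹ * g *
            (((List.range n).map fun i => (φ ^ (i * k)) a).prod) := by
  intro g
  set x : G ⋊[zpowersHom (MulAut G) φ] Multiplicative ℤ := xel φ a k with hx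
  set K := Subgroup.zpowers x with hK
  have hkz : (k : ℤ) ≠ 0 := by exact_mod_cast Nat.one_le_iff_ne_zero.mp hk
  have hmem : (SemidirectProduct.inl g ∈
      commSet (Subgroup.zpowers
        (⟨a, Multiplicative.ofAdd (k : ℤ)⟩ :
          G ⋊[zpowersHom (MulAut G) φ] Multiplicative ℤ))) ↔
      Infinite ↥(K ⊓ conjSub (SemidirectProduct.inl g) K) := Iff.rfl
  rw [hmem]
  constructor
  · intro h
    rcases Subgroup.bot_or_exists_ne_one (K ⊓ conjSub (SemidirectProduct.inl g) K)
      with hb | ⟨z, hz, hz1⟩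
    · rw [hb] at h
      haveI := h
      exact (not_finite ↥(⊥ : Subgroup (G ⋊[zpowersHom (MulAut G) φ] Multiplicative ℤ))).elim
    · rw [Subgroup.mem_inf] at hz
      obtain ⟨hzK, hzC⟩ := hz
      obtain ⟨m, hm⟩ := Subgroup.mem_zpowers_iff.mp hzK
      obtain ⟨y, hyK, hy⟩ := hzC
      obtain ⟨j, hj⟩ := Subgroup.mem_zpowers_iff.mp hyK
      have he : x ^ m = (SemidirectProduct.inl g)⁻¹ * x ^ j * SemidirectProduct.inl g := by
        rw [← hm, ← hj] at hy
        rw [← hy]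
        simp only [MulEquiv.coe_toMonoidHom, MulAut.conj_apply, inv_inv]
      have hr := congrArg SemidirectProduct.right he
      rw [SemidirectProduct.mul_right, SemidirectProduct.mul_right,
        SemidirectProduct.right_inl] at hr
      have hr2 : ((SemidirectProduct.inl g :
          G ⋊[zpowersHom (MulAut G) φ] Multiplicative ℤ)⁻¹).right = 1 := by
        rw [← map_inv SemidirectProduct.inl g, SemidirectProduct.right_inl]
      rw [hr2] at hr
      simp only [one_mul, mul_one] at hr
      rw [hx, xel_right, xel_right] at hr
      have hmj : m = j := mul_right_cancel₀ hkz (Multiplicative.ofAdd.injective hr)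
      rw [← hmj] at he
      have hc : Commute (SemidirectProduct.inl g) (x ^ m) := by
        have hgoal : SemidirectProduct.inl g * x ^ m = x ^ m * SemidirectProduct.inl g := by
          nth_rewrite 1 [he]
          group
        exact hgoal
      have hm0 : m ≠ 0 := by
        intro h0
        rw [h0, zpow_zero] at hm
        exact hz1 hm.symm
      refine ⟨m.natAbs, Int.natAbs_pos.mpr hm0, ?_⟩
      rw [← xel_commute_iff φ a k g m.natAbs, ← hx]
      have hzn : (x ^ (m.natAbs : ℕ)) = x ^ (m.natAbs : ℤ) := (zpow_natCast x m.natAbs).symm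
      rw [hzn]
      rcases Int.natAbs_eq m with h1 | h1
      · rw [← h1]; exact hc
      · have h2 : x ^ m = (x ^ (m.natAbs : ℤ))⁻¹ := by
          conv_lhs => rw [h1]
          rw [zpow_neg]
        rw [h2] at hc
        exact Commute.inv_right_iff.mp hc
  · rintro ⟨n, hn, heq⟩
    have hc : Commute (SemidirectProduct.inl g) (x ^ n) :=
      (xel_commute_iff φ a k g n).mpr heq
    have hle : Subgroup.zpowers (x ^ n) ≤ K ⊓ conjSub (SemidirectProduct.inl g) K := by
      intro y hy
      obtain ⟨m, hm⟩ := Subgroup.mem_zpowers_iff.mp hy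
      rw [Subgroup.mem_inf]
      have hyK : y ∈ K := by
        rw [← hm, ← zpow_natCast x n, ← zpow_mul]
        exact Subgroup.zpow_mem _ (Subgroup.mem_zpowers x) _
      refine ⟨hyK, ⟨y, hyK, ?_⟩⟩
      have hcy : Commute (SemidirectProduct.inl g) y := by
        rw [← hm]; exact hc.zpow_right m
      simp only [MulEquiv.coe_toMonoidHom, MulAut.conj_apply, inv_inv]
      rw [hcy.inv_left.eq]
      group
    have hinf : Infinite ↥(Subgroup.zpowers (x ^ n)) := by
      refine Infinite.of_injective
        (fun m : ℤ => (⟨(x ^ n) ^ m, Subgroup.zpow_mem _ (Subgroup.mem_zpowers _) m⟩ :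
          Subgroup.zpowers (x ^ n))) ?_
      intro m1 m2 hmm
      rw [Subtype.mk_eq_mk] at hmm
      have hr := congrArg SemidirectProduct.right hmm
      rw [← zpow_natCast x n, ← zpow_mul, ← zpow_mul, hx, xel_right, xel_right] at hr
      have h2 := Multiplicative.ofAdd.injective hr
      have hn0 : (n : ℤ) ≠ 0 := by exact_mod_cast Nat.one_le_iff_ne_zero.mp hn
      have h3 : (n : ℤ) * m1 = (n : ℤ) * m2 := mul_right_cancel₀ hkz h2
      exact mul_left_cancel₀ hn0 h3
    have hsetinf : ((Subgroup.zpowers (x ^ n) : Subgroup _) :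
        Set (G ⋊[zpowersHom (MulAut G) φ] Multiplicative ℤ)).Infinite :=
      Set.infinite_coe_iff.mp hinf
    exact Set.infinite_coe_iff.mpr (hsetinf.mono (SetLike.coe_subset_coe.mpr hle))
end

section
/- Let Γ = G ⋊_φ ℤ with G a torsion group. For every infinite virtually cyclic subgroup H of Γ, there exists a subgroup T of G and an automorphism θ of T such that Comm_Γ(H) ≅ T ⋊_θ ℤ and for each g ∈ T there exists n ≥ 1 with θⁿ(g) = g. -/
open Subgroup SemidirectProduct

lemma aux_infinite_of_le {Γ : Type*} [Group Γ] {A B : Subgroup Γ} (h : A ≤ B)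
    [Infinite A] : Infinite B :=
  Infinite.of_injective (Subgroup.inclusion h) (Subgroup.inclusion_injective h)

lemma aux_finite_of_finiteIndex {Γ : Type*} [Group Γ] (C : Subgroup Γ)
    (_ : C.FiniteIndex) (_ : Finite C) : Finite Γ :=
  Finite.of_equiv _ (Subgroup.groupEquivQuotientProdSubgroup (s := C)).symm

lemma aux_infinite_inf_of_relindex {Γ : Type*} [Group Γ] (A L : Subgroup Γ)
    (h : A.relIndex L ≠ 0) [Infinite L] : Infinite ↥(A ⊓ L) := by
  by_contra hfin
  rw [not_infinite_iff_finite] at hfin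
  haveI : (A.subgroupOf L).FiniteIndex := ⟨h⟩
  haveI : Finite ↥(A.subgroupOf L) := by
    rw [← inf_subgroupOf_right A L]
    exact Finite.of_equiv _ (subgroupOfEquivOfLe inf_le_right).symm.toEquiv
  haveI : Finite L := aux_finite_of_finiteIndex (A.subgroupOf L) ‹_› ‹_›
  exact not_finite ↥L

set_option maxHeartbeats 2000000 in
theorem stmt11 {G : Type*} [Group G] (hG : Monoid.IsTorsion G) (φ : MulAut G)
    (H : Subgroup (G ⋊[zpowersHom (MulAut G) φ] Multiplicative ℤ))
    [Infinite H] (hH : VirtuallyCyclic H) :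
    ∃ (T : Subgroup G) (θ : MulAut T)
      (f : (T ⋊[zpowersHom (MulAut T) θ] Multiplicative ℤ) →*
        (G ⋊[zpowersHom (MulAut G) φ] Multiplicative ℤ)),
      Function.Injective f ∧ Set.range f = commSet H ∧
      ∀ g : T, ∃ n : ℕ, 1 ≤ n ∧ (θ ^ n) g = g := by
  obtain ⟨C, hCcyc, hCfi⟩ := hH
  -- C is infinite
  haveI : Infinite C := by
    by_contra hfin
    rw [not_infinite_iff_finite] at hfin
    haveI : Finite H := aux_finite_of_finiteIndex C hCfi hfin
    exact not_finite ↥H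
  haveI := hCcyc
  obtain ⟨c₀, hc₀⟩ := IsCyclic.exists_generator (α := C)
  have hc₀ord : ¬ IsOfFinOrder c₀ := by
    intro h
    have hfin : (Subgroup.zpowers c₀ : Set C).Finite := finite_zpowers.mpr h
    haveI : Finite C := by
      have : Finite ↥(Subgroup.zpowers c₀) := hfin.to_subtype
      refine Finite.of_injective (fun x : C => (⟨x, hc₀ x⟩ : ↥(Subgroup.zpowers c₀))) ?_
      intro a b hab
      exact congrArg Subtype.val hab
    exact not_finite C
  -- the element c in Γ
  set c := (((c₀ : ↥C) : ↥H) : G ⋊[zpowersHom (MulAut G) φ] Multiplicative ℤ) with hc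
  have hcH : c ∈ H := (c₀ : H).2
  have hcord : ¬ IsOfFinOrder c := by
    intro h
    apply hc₀ord
    rw [isOfFinOrder_iff_pow_eq_one] at h ⊢
    obtain ⟨n, hn, h1⟩ := h
    refine ⟨n, hn, ?_⟩
    rw [← SubgroupClass.coe_pow, OneMemClass.coe_eq_one, ← SubgroupClass.coe_pow,
      OneMemClass.coe_eq_one] at h1
    exact h1
  -- kernel facts
  have hker : ∀ x : G ⋊[zpowersHom (MulAut G) φ] Multiplicative ℤ,
      rightHom x = 1 → inl x.left = x := by
    intro x hx
    rw [rightHom_eq_right] at hx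
    conv_rhs => rw [← inl_left_mul_inr_right x]
    rw [hx, map_one, mul_one]
  have htor : ∀ x : G ⋊[zpowersHom (MulAut G) φ] Multiplicative ℤ,
      rightHom x = 1 → IsOfFinOrder x := by
    intro x hx
    rw [← hker x hx]
    exact (inl_injective.isOfFinOrder_iff).mpr (hG x.left)
  -- the projection of c is nontrivial
  have hdd : Multiplicative.toAdd (rightHom c) ≠ 0 := by
    intro h
    exact hcord (htor c (Multiplicative.toAdd.injective (by simpa using h)))
  -- finite relindex of zpowers c in H
  have hmapC : Subgroup.map H.subtype C = Subgroup.zpowers c := by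
    apply le_antisymm
    · rintro _ ⟨y, hy, rfl⟩
      obtain ⟨n, hn⟩ := hc₀ ⟨y, hy⟩
      rw [Subgroup.mem_zpowers_iff]
      refine ⟨n, ?_⟩
      have := congrArg (fun z : C => ((z : H) : G ⋊[zpowersHom (MulAut G) φ] Multiplicative ℤ)) hn
      simpa using this
    · rw [Subgroup.zpowers_le]
      exact ⟨(c₀ : H), c₀.2, rfl⟩
  have hA : (Subgroup.zpowers c).relIndex H ≠ 0 := by
    rw [← hmapC]
    have : (Subgroup.map H.subtype C).subgroupOf H = C :=
      Subgroup.comap_map_eq_self_of_injective H.subtype_injective C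
    rw [Subgroup.relIndex, this]
    exact hCfi.index_ne_zero
  -- key extraction lemma
  have key : ∀ L : Subgroup (G ⋊[zpowersHom (MulAut G) φ] Multiplicative ℤ),
      L ≤ H → Infinite L → ∃ m : ℤ, m ≠ 0 ∧ c ^ m ∈ L := by
    intro L hL hLinf
    have hrel : (Subgroup.zpowers c).relIndex L ≠ 0 := by
      intro h0
      exact hA (Subgroup.relIndex_eq_zero_of_le_right hL h0)
    haveI := hLinf
    haveI := aux_infinite_inf_of_relindex (Subgroup.zpowers c) L hrel
    obtain ⟨u, hu⟩ := exists_ne (1 : ↥(Subgroup.zpowers c ⊓ L))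
    obtain ⟨hu1, hu2⟩ := Subgroup.mem_inf.mp u.2
    obtain ⟨m, hm⟩ := Subgroup.mem_zpowers_iff.mp hu1
    refine ⟨m, ?_, hm ▸ hu2⟩
    rintro rfl
    exact hu (Subtype.ext (by simpa using hm.symm))
  -- the commensurator subgroup
  set Kgrp : Subgroup (G ⋊[zpowersHom (MulAut G) φ] Multiplicative ℤ) :=
    { carrier := {x | ∃ m : ℤ, m ≠ 0 ∧ Commute x (c ^ m)}
      one_mem' := ⟨1, one_ne_zero, Commute.one_left _⟩
      mul_mem' := by
        rintro x y ⟨m, hm, hx⟩ ⟨m', hm', hy⟩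
        refine ⟨m * m', mul_ne_zero hm hm', ?_⟩
        have hx' : Commute x (c ^ (m * m')) := by
          rw [zpow_mul]; exact hx.zpow_right m'
        have hy' : Commute y (c ^ (m * m')) := by
          rw [mul_comm m m', zpow_mul]; exact hy.zpow_right m
        exact hx'.mul_left hy'
      inv_mem' := by
        rintro x ⟨m, hm, hx⟩
        exact ⟨m, hm, hx.inv_left⟩ } with hKgrp
  have memK : ∀ x : G ⋊[zpowersHom (MulAut G) φ] Multiplicative ℤ,
      x ∈ Kgrp ↔ ∃ m : ℤ, m ≠ 0 ∧ Commute x (c ^ m) := fun x => Iff.rfl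
  have hcK : c ∈ Kgrp := ⟨1, one_ne_zero, (Commute.refl c).zpow_right 1⟩
  -- the zpowers of powers of c are infinite
  have hzpow : ∀ m : ℤ, m ≠ 0 → ¬ IsOfFinOrder (c ^ m) := by
    intro m hm h
    rw [isOfFinOrder_iff_pow_eq_one] at h
    obtain ⟨n, hn, h1⟩ := h
    apply hcord
    rw [isOfFinOrder_iff_zpow_eq_one]
    refine ⟨m * n, mul_ne_zero hm (by exact_mod_cast hn.ne'), ?_⟩
    rw [zpow_mul, zpow_natCast]
    exact h1
  -- main claim : commSet H = Kgrp
  have eqK : commSet H = (Kgrp : Set _) := by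
    ext x
    simp only [commSet, Set.mem_setOf_eq, SetLike.mem_coe, memK]
    constructor
    · intro hinf
      haveI := hinf
      have hL : H ⊓ conjSub x H ≤ H := inf_le_left
      have hrel : (Subgroup.zpowers c).relIndex (H ⊓ conjSub x H) ≠ 0 := fun h0 =>
        hA (Subgroup.relIndex_eq_zero_of_le_right hL h0)
      haveI hK1 : Infinite ↥(Subgroup.zpowers c ⊓ (H ⊓ conjSub x H)) :=
        aux_infinite_inf_of_relindex _ _ hrel
      set K1 := Subgroup.zpowers c ⊓ (H ⊓ conjSub x H) with hK1def
      set L2 := Subgroup.map (MulAut.conj x).toMonoidHom K1 with hL2def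
      haveI : Infinite L2 :=
        Infinite.of_injective _
          (K1.equivMapOfInjective (MulAut.conj x).toMonoidHom
            (MulAut.conj x).injective).injective
      have hL2H : L2 ≤ H := by
        rintro _ ⟨u, hu, rfl⟩
        obtain ⟨h, hh, rfl⟩ := (Subgroup.mem_inf.mp hu).2.2
        simpa [MulAut.conj_apply, mul_assoc] using hh
      obtain ⟨b, hb, hbL2⟩ := key L2 hL2H ‹Infinite L2›
      obtain ⟨u, hu, hconj⟩ := hbL2
      obtain ⟨a, ha⟩ := Subgroup.mem_zpowers_iff.mp (Subgroup.mem_inf.mp hu).1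
      rw [← ha] at hconj
      -- hconj : conj x (c ^ a) = c ^ b
      have hconj' : x * c ^ a * x⁻¹ = c ^ b := hconj
      have heq : rightHom c ^ a = rightHom c ^ b := by
        have h0 := congrArg rightHom hconj'
        simp only [map_mul, map_zpow, map_inv] at h0
        rw [mul_comm (rightHom x)] at h0
        rwa [mul_inv_cancel_right] at h0
      have hab : a = b := by
        have h1 := congrArg Multiplicative.toAdd heq
        simp only [toAdd_zpow, smul_eq_mul] at h1
        exact mul_right_cancel₀ hdd h1
      rw [← hab] at hconj'
      exact ⟨a, hab ▸ hb, mul_inv_eq_iff_eq_mul.mp hconj'⟩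
    · rintro ⟨m, hm, hcomm⟩
      have hmem : c ^ m ∈ H ⊓ conjSub x H := by
        refine Subgroup.mem_inf.mpr ⟨H.zpow_mem hcH m, ?_⟩
        refine ⟨c ^ m, H.zpow_mem hcH m, ?_⟩
        have := hcomm.inv_left.eq
        simp only [MulEquiv.coe_toMonoidHom, MulAut.conj_apply]
        rw [this]
        group
      have hzle : Subgroup.zpowers (c ^ m) ≤ H ⊓ conjSub x H :=
        Subgroup.zpowers_le.mpr hmem
      haveI : Infinite ↥(Subgroup.zpowers (c ^ m)) :=
        Set.infinite_coe_iff.mpr (infinite_zpowers.mpr (hzpow m hm))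
      exact aux_infinite_of_le hzle
  -- image subgroup in Multiplicative ℤ
  set P : Subgroup (Multiplicative ℤ) := Kgrp.map rightHom with hP
  haveI : IsCyclic ↥P := inferInstance
  obtain ⟨e₀, he₀⟩ := IsCyclic.exists_generator (α := ↥P)
  set e := (e₀ : Multiplicative ℤ) with he
  have heP : e ∈ P := e₀.2
  have hgen : ∀ y ∈ P, ∃ n : ℤ, e ^ n = y := by
    intro y hy
    obtain ⟨n, hn⟩ := he₀ ⟨y, hy⟩
    exact ⟨n, by simpa using congrArg Subtype.val hn⟩
  obtain ⟨t, htK, hte⟩ := heP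
  have hee : Multiplicative.toAdd e ≠ 0 := by
    intro h0
    have h1 : e = 1 := Multiplicative.toAdd.injective (by simpa using h0)
    obtain ⟨nn, hnn⟩ := hgen (rightHom c) ⟨c, hcK, rfl⟩
    apply hdd
    rw [← hnn, h1, one_zpow]
    simp
  -- the subgroup T of G
  set T : Subgroup G := Kgrp.comap inl with hT
  have memT : ∀ g : G, g ∈ T ↔ inl g ∈ Kgrp := fun g => Iff.rfl
  -- conjugation facts
  have hJinl : ∀ (u : G ⋊[zpowersHom (MulAut G) φ] Multiplicative ℤ) (g : G),
      inl ((u * inl g * u⁻¹).left) = u * inl g * u⁻¹ := by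
    intro u g
    apply hker
    simp [map_mul]
  have hJmem : ∀ (u : G ⋊[zpowersHom (MulAut G) φ] Multiplicative ℤ), u ∈ Kgrp →
      ∀ g : ↥T, (u * inl (g : G) * u⁻¹).left ∈ T := by
    intro u hu g
    rw [memT, hJinl]
    exact mul_mem (mul_mem hu g.2) (inv_mem hu)
  set θfun : ↥T → ↥T := fun g => ⟨(t * inl (g : G) * t⁻¹).left, hJmem t htK g⟩ with hθfun
  set θinv : ↥T → ↥T := fun g => ⟨(t⁻¹ * inl (g : G) * t).left, by
      have := hJmem t⁻¹ (inv_mem htK) g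
      rwa [inv_inv] at this⟩ with hθinv
  have hinlinj : Function.Injective
      (inl : G →* G ⋊[zpowersHom (MulAut G) φ] Multiplicative ℤ) := inl_injective
  have hθfuninl : ∀ g : ↥T, inl ((θfun g : ↥T) : G) = t * inl (g : G) * t⁻¹ :=
    fun g => hJinl t (g : G)
  have hθinvinl : ∀ g : ↥T, inl ((θinv g : ↥T) : G) = t⁻¹ * inl (g : G) * t := by
    intro g
    have h0 := hJinl t⁻¹ (↑g : G)
    rw [inv_inv] at h0
    exact h0
  set θ : MulAut ↥T :=
    { toFun := θfun
      invFun := θinv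
      left_inv := by
        intro g
        apply Subtype.ext
        apply hinlinj
        rw [hθinvinl, hθfuninl]
        group
      right_inv := by
        intro g
        apply Subtype.ext
        apply hinlinj
        rw [hθfuninl, hθinvinl]
        group
      map_mul' := by
        intro a b
        apply Subtype.ext
        apply hinlinj
        rw [Subgroup.coe_mul, map_mul, hθfuninl a, hθfuninl b, hθfuninl (a*b), Subgroup.coe_mul, map_mul]
        group } with hθdef
  have hθsymm : ∀ g : ↥T, inl (((θ⁻¹ : MulAut ↥T) g : ↥T) : G) = t⁻¹ * inl (g : G) * t :=
    fun g => hθinvinl g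
  have θpow : ∀ (n : ℤ) (g : ↥T), inl (((θ ^ n) g : ↥T) : G) = t ^ n * inl (g : G) * (t ^ n)⁻¹ := by
    intro n
    induction n using Int.induction_on with
    | zero => intro g; simp
    | succ k ih =>
      intro g
      have h1 : (θ ^ ((k : ℤ) + 1)) g = (θ ^ (k : ℤ)) (θ g) := by
        rw [zpow_add_one]
        rfl
      have h2 : θ g = θfun g := rfl
      rw [h1, ih (θ g), h2, hθfuninl, zpow_add_one]
      group
    | pred k ih =>
      intro g
      have h1 : (θ ^ (-(k : ℤ) - 1)) g = (θ ^ (-(k : ℤ))) ((θ⁻¹ : MulAut ↥T) g) := by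
        rw [zpow_sub_one]
        rfl
      rw [h1, ih ((θ⁻¹ : MulAut ↥T) g), hθsymm, zpow_sub_one]
      group
  -- the lift homomorphism
  have hcompat : ∀ z : Multiplicative ℤ,
      ((inl : G →* G ⋊[zpowersHom (MulAut G) φ] Multiplicative ℤ).comp T.subtype).comp
          ((zpowersHom (MulAut ↥T) θ z)).toMonoidHom
        = (MulAut.conj (zpowersHom (G ⋊[zpowersHom (MulAut G) φ] Multiplicative ℤ) t z)).toMonoidHom.comp
          ((inl : G →* G ⋊[zpowersHom (MulAut G) φ] Multiplicative ℤ).comp T.subtype) := by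
    intro z
    refine MonoidHom.ext fun g => ?_
    simp only [MonoidHom.comp_apply, MulEquiv.coe_toMonoidHom, MulAut.conj_apply,
      zpowersHom_apply, Subgroup.coe_subtype]
    exact θpow (Multiplicative.toAdd z) g
  set f := SemidirectProduct.lift
    ((inl : G →* G ⋊[zpowersHom (MulAut G) φ] Multiplicative ℤ).comp T.subtype)
    (zpowersHom (G ⋊[zpowersHom (MulAut G) φ] Multiplicative ℤ) t) hcompat with hf
  have hfapply : ∀ p : ↥T ⋊[zpowersHom (MulAut ↥T) θ] Multiplicative ℤ,
      f p = inl ((p.left : ↥T) : G) * t ^ (Multiplicative.toAdd p.right) := fun p => rfl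
  -- injectivity
  have hinj : Function.Injective f := by
    rw [injective_iff_map_eq_one]
    intro p hp
    have h1 : rightHom (f p) = e ^ (Multiplicative.toAdd p.right) := by
      rw [hfapply]
      simp [map_mul, map_zpow, hte]
    rw [hp, map_one] at h1
    have h2 : Multiplicative.toAdd p.right = 0 := by
      have h3 := congrArg Multiplicative.toAdd h1
      simp only [toAdd_zpow, smul_eq_mul, toAdd_one] at h3
      rcases mul_eq_zero.mp h3.symm with h | h
      · exact h
      · exact absurd h hee
    have h3 : p.right = 1 := Multiplicative.toAdd.injective (by simpa using h2)
    have h4 : f p = inl ((p.left : ↥T) : G) := by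
      rw [hfapply, h2, zpow_zero, mul_one]
    rw [h4] at hp
    have h5 : ((p.left : ↥T) : G) = 1 := hinlinj (by simpa using hp)
    have h6 : p.left = 1 := Subtype.ext h5
    rw [← inl_left_mul_inr_right p, h6, h3]
    simp
  -- range
  have hrange : Set.range f = (Kgrp : Set _) := by
    ext y
    constructor
    · rintro ⟨p, rfl⟩
      rw [hfapply]
      exact mul_mem ((memT _).mp p.left.2) (Subgroup.zpow_mem _ htK _)
    · intro hy
      rw [SetLike.mem_coe] at hy
      obtain ⟨n, hn⟩ := hgen (rightHom y) ⟨y, hy, rfl⟩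
      have hq : y * (t ^ n)⁻¹ ∈ Kgrp := mul_mem hy (inv_mem (Subgroup.zpow_mem _ htK n))
      have hq1 : rightHom (y * (t ^ n)⁻¹) = 1 := by
        rw [map_mul, map_inv, map_zpow, hte, ← hn]
        group
      have hq2 := hker _ hq1
      have hqT : (y * (t ^ n)⁻¹).left ∈ T := by
        rw [memT, hq2]
        exact hq
      refine ⟨⟨⟨(y * (t ^ n)⁻¹).left, hqT⟩, Multiplicative.ofAdd n⟩, ?_⟩
      rw [hfapply]
      simp only [toAdd_ofAdd]
      rw [hq2]
      group
  -- local boundedness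
  have hbdd : ∀ g : ↥T, ∃ n : ℕ, 1 ≤ n ∧ (θ ^ n) g = g := by
    intro g
    obtain ⟨mg, hmg, hcg⟩ := (memK _).mp ((memT _).mp g.2)
    obtain ⟨mt, hmt, hct⟩ := (memK t).mp htK
    set z0 := c ^ (mg * mt) with hz0
    have hgz0 : Commute (inl (g : G)) z0 := by
      rw [hz0, zpow_mul]
      exact hcg.zpow_right mt
    have htz0 : Commute t z0 := by
      rw [hz0, mul_comm mg mt, zpow_mul]
      exact hct.zpow_right mg
    have hz0K : z0 ∈ Kgrp := Subgroup.zpow_mem _ hcK _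
    have hz0r : Multiplicative.toAdd (rightHom z0) ≠ 0 := by
      rw [hz0, map_zpow, toAdd_zpow, smul_eq_mul]
      exact mul_ne_zero (mul_ne_zero hmg hmt) hdd
    obtain ⟨s0, hs0⟩ := hgen (rightHom z0) ⟨z0, hz0K, rfl⟩
    have hs0ne : s0 ≠ 0 := by
      rintro rfl
      apply hz0r
      rw [← hs0]
      simp
    obtain ⟨z, s, hs, hgz, htz, hzK, hze⟩ :
        ∃ (z : G ⋊[zpowersHom (MulAut G) φ] Multiplicative ℤ) (s : ℤ), 0 < s ∧
          Commute (inl (g : G)) z ∧ Commute t z ∧ z ∈ Kgrp ∧ e ^ s = rightHom z := by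
      rcases hs0ne.lt_or_gt with h | h
      · refine ⟨z0⁻¹, -s0, by omega, hgz0.inv_right, htz0.inv_right, inv_mem hz0K, ?_⟩
        rw [map_inv, ← hs0]
        group
      · exact ⟨z0, s0, h, hgz0, htz0, hz0K, hs0⟩
    set w := t ^ s * z⁻¹ with hw
    have hwr1 : rightHom w = 1 := by
      rw [hw, map_mul, map_inv, map_zpow, hte, ← hze]
      group
    have hwK : w ∈ Kgrp := mul_mem (Subgroup.zpow_mem _ htK s) (inv_mem hzK)
    have hwinl := hker w hwr1
    have hwT : w.left ∈ T := by
      rw [memT, hwinl]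
      exact hwK
    have hwfin : IsOfFinOrder w.left := hG w.left
    set r := orderOf w.left with hr
    have hrpos : 0 < r := hwfin.orderOf_pos
    have hwr : w ^ r = 1 := by
      rw [← hwinl, ← map_pow, pow_orderOf_eq_one, map_one]
    have hconjw : ∀ x : G ⋊[zpowersHom (MulAut G) φ] Multiplicative ℤ,
        Commute x z → t ^ s * x * (t ^ s)⁻¹ = w * x * w⁻¹ := by
      intro x hx
      have hts : t ^ s = w * z := by rw [hw]; group
      have h2 : z * x * z⁻¹ = x := by
        rw [← hx.eq]
        group
      rw [hts]
      calc (w * z) * x * (w * z)⁻¹ = w * (z * x * z⁻¹) * w⁻¹ := by group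
      _ = w * x * w⁻¹ := by rw [h2]
    have claim : ∀ k : ℕ, inl (((θ ^ (s * k)) g : ↥T) : G) = w ^ k * inl (g : G) * (w ^ k)⁻¹
        ∧ Commute (inl (((θ ^ (s * k)) g : ↥T) : G)) z := by
      intro k
      induction k with
      | zero => simpa using hgz
      | succ k ih =>
        have hcast : s * ((k + 1 : ℕ) : ℤ) = s + s * (k : ℤ) := by push_cast; ring
        have h1 : (θ ^ (s * ((k + 1 : ℕ) : ℤ))) g = (θ ^ s) ((θ ^ (s * (k : ℤ))) g) := by
          rw [hcast, zpow_add]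
          rfl
        have hts : Commute (t ^ s) z := htz.zpow_left s
        constructor
        · rw [h1, θpow s ((θ ^ (s * (k : ℤ))) g), hconjw _ ih.2, ih.1, pow_succ]
          group
        · rw [h1, θpow s ((θ ^ (s * (k : ℤ))) g)]
          exact (hts.mul_left ih.2).mul_left hts.inv_left
    refine ⟨s.toNat * r, Nat.mul_pos (by omega) hrpos, ?_⟩
    have h1 := (claim r).1
    rw [hwr] at h1
    simp only [one_mul, inv_one, mul_one] at h1
    have h3 : (θ ^ (s * (r : ℤ))) g = g := Subtype.ext (hinlinj h1)
    have h2 : ((s.toNat * r : ℕ) : ℤ) = s * (r : ℤ) := by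
      push_cast [Int.toNat_of_nonneg hs.le]
      ring
    calc (θ ^ (s.toNat * r)) g = (θ ^ ((s.toNat * r : ℕ) : ℤ)) g := by rw [zpow_natCast]
    _ = g := by rw [h2]; exact h3
  refine ⟨T, θ, f, hinj, ?_, hbdd⟩
  rw [eqK]
  exact hrange
end

section
/- Let Γ = T ⋊_θ ⟨s⟩ with T torsion and suppose every element of T has finite θ-orbit. If (g, s^m) ∈ Γ with m ≥ 1, then some positive power of (g, s^m) equals (e, s^{mnp}) for some n, p ≥ 1; consequently ⟨(g,s^m)⟩ ∩ ⟨(e,s)⟩ is infinite. -/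
lemma aux_fix_zpow {T : Type*} [Group T] (σ : MulAut T) (a : T) (h : σ a = a) :
    ∀ k : ℤ, (σ ^ k) a = a := by
  have hinv : σ⁻¹ a = a := by
    conv_lhs => rw [← h]
    simp
  intro k
  induction k using Int.induction_on with
  | zero => simp
  | succ k ih => rw [zpow_add, zpow_one, MulAut.mul_apply, h, ih]
  | pred k ih => rw [sub_eq_add_neg, zpow_add, zpow_neg_one, MulAut.mul_apply, hinv, ih]

lemma aux_pow_fixed {T : Type*} [Group T] (θ : MulAut T) (a : T) (k : ℤ)
    (ha : (θ ^ k) a = a) (p : ℕ) :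
    (⟨a, Multiplicative.ofAdd k⟩ : T ⋊[zpowersHom (MulAut T) θ] Multiplicative ℤ) ^ p
      = ⟨a ^ p, Multiplicative.ofAdd (k * p)⟩ := by
  induction p with
  | zero => ext <;> simp
  | succ p ih =>
    have hfix : (θ ^ ((p : ℤ) * k)) a = a := by
      rw [mul_comm, zpow_mul]
      exact aux_fix_zpow (θ ^ k) a ha p
    rw [pow_succ, ih, SemidirectProduct.mul_def]
    ext
    · show a ^ p * (θ ^ (k * (p : ℤ))) a = a ^ (p + 1)
      rw [mul_comm k ((p : ℤ)), hfix, pow_succ]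
    · show Multiplicative.ofAdd (k * p) * Multiplicative.ofAdd k
        = Multiplicative.ofAdd (k * (p + 1 : ℕ))
      rw [← ofAdd_add]
      congr 1
      push_cast
      ring

lemma aux_pow_formula {T : Type*} [Group T] (θ : MulAut T) (g : T) (m : ℤ) (n : ℕ) :
    (⟨g, Multiplicative.ofAdd m⟩ : T ⋊[zpowersHom (MulAut T) θ] Multiplicative ℤ) ^ n
      = ⟨((List.range n).map fun i : ℕ => (θ ^ (m * (i : ℤ))) g).prod,
          Multiplicative.ofAdd (m * n)⟩ := by
  induction n with
  | zero => ext <;> simp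
  | succ n ih =>
    rw [pow_succ, ih, SemidirectProduct.mul_def]
    ext
    · show (((List.range n).map fun i : ℕ => (θ ^ (m * (i : ℤ))) g).prod) *
          (zpowersHom (MulAut T) θ (Multiplicative.ofAdd (m * n))) g
        = ((List.range (n + 1)).map fun i : ℕ => (θ ^ (m * (i : ℤ))) g).prod
      rw [List.range_succ, List.map_append, List.prod_append]
      simp [mul_comm]
    · show Multiplicative.ofAdd (m * n) * Multiplicative.ofAdd m
        = Multiplicative.ofAdd (m * (n + 1 : ℕ))
      rw [← ofAdd_add]
      congr 1
      push_cast
      ring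

theorem stmt13 {T : Type*} [Group T] (hT : Monoid.IsTorsion T) (θ : MulAut T)
    (hθ : ∀ g : T, ∃ n : ℕ, 1 ≤ n ∧ (θ ^ n) g = g)
    (g : T) (m : ℤ) (hm : 1 ≤ m) :
    (∃ n p : ℕ, 1 ≤ n ∧ 1 ≤ p ∧
      ((⟨g, Multiplicative.ofAdd m⟩ : T ⋊[zpowersHom (MulAut T) θ] Multiplicative ℤ) ^ (n * p)
        = ⟨1, Multiplicative.ofAdd (m * (n * p : ℕ))⟩)) ∧
    Infinite ↥(Subgroup.zpowers
        (⟨g, Multiplicative.ofAdd m⟩ : T ⋊[zpowersHom (MulAut T) θ] Multiplicative ℤ) ⊓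
      Subgroup.zpowers
        (⟨1, Multiplicative.ofAdd 1⟩ : T ⋊[zpowersHom (MulAut T) θ] Multiplicative ℤ)) := by
  classical
  set x : T ⋊[zpowersHom (MulAut T) θ] Multiplicative ℤ := ⟨g, Multiplicative.ofAdd m⟩ with hx
  obtain ⟨n, hn1, hn⟩ := hθ g
  have hnz : (θ ^ (n : ℤ)) g = g := by rwa [zpow_natCast]
  set P : T := ((List.range n).map fun i : ℕ => (θ ^ (m * (i : ℤ))) g).prod with hP
  have hfixP : (θ ^ (m * (n : ℤ))) P = P := by
    rw [hP, map_list_prod, List.map_map]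
    have hfun : (⇑(θ ^ (m * (n : ℤ))) ∘ fun i : ℕ => (θ ^ (m * (i : ℤ))) g)
        = fun i : ℕ => (θ ^ (m * (i : ℤ))) g := by
      funext i
      show (θ ^ (m * (n : ℤ))) ((θ ^ (m * (i : ℤ))) g) = (θ ^ (m * (i : ℤ))) g
      have hcomm : (θ ^ (m * (n : ℤ))) ((θ ^ (m * (i : ℤ))) g)
          = (θ ^ (m * (i : ℤ))) ((θ ^ (m * (n : ℤ))) g) := by
        rw [← MulAut.mul_apply, ← MulAut.mul_apply, ← zpow_add, ← zpow_add, add_comm]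
      rw [hcomm]
      congr 1
      rw [mul_comm m (n : ℤ), zpow_mul]
      exact aux_fix_zpow _ g hnz m
    rw [hfun]
  set p : ℕ := orderOf P with hp
  have hPfin : IsOfFinOrder P := hT P
  have hp1 : 1 ≤ p := hPfin.orderOf_pos
  have hPp : P ^ p = 1 := pow_orderOf_eq_one P
  have key : x ^ (n * p) = ⟨1, Multiplicative.ofAdd (m * (n * p : ℕ))⟩ := by
    rw [pow_mul, aux_pow_formula, ← hP, aux_pow_fixed θ P (m * n) hfixP, hPp]
    congr 1
    push_cast
    ring
  refine ⟨⟨n, p, hn1, hp1, key⟩, ?_⟩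
  set z : T ⋊[zpowersHom (MulAut T) θ] Multiplicative ℤ :=
    ⟨1, Multiplicative.ofAdd (m * (n * p : ℕ))⟩ with hz
  have hnp1 : 1 ≤ n * p := Nat.mul_le_mul hn1 hp1
  have hN : (1 : ℤ) ≤ m * (n * p : ℕ) := by
    have h1 : (1 : ℤ) ≤ ((n * p : ℕ) : ℤ) := by exact_mod_cast hnp1
    nlinarith
  have hzmem : z ∈ Subgroup.zpowers x ⊓ Subgroup.zpowers
      (⟨1, Multiplicative.ofAdd 1⟩ : T ⋊[zpowersHom (MulAut T) θ] Multiplicative ℤ) := by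
    constructor
    · refine ⟨((n * p : ℕ) : ℤ), ?_⟩
      show x ^ ((n * p : ℕ) : ℤ) = z
      rw [zpow_natCast]
      exact key
    · refine ⟨m * (n * p : ℕ), ?_⟩
      show (⟨1, Multiplicative.ofAdd 1⟩ :
          T ⋊[zpowersHom (MulAut T) θ] Multiplicative ℤ) ^ (m * ((n * p : ℕ) : ℤ)) = z
      have hpowN : ((⟨1, Multiplicative.ofAdd 1⟩ :
          T ⋊[zpowersHom (MulAut T) θ] Multiplicative ℤ)) ^ (m * ((n * p : ℕ) : ℤ)).toNat
          = z := by
        rw [aux_pow_fixed θ 1 1 (by simp), hz]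
        have h1 : (1 : T) ^ (m * ((n * p : ℕ) : ℤ)).toNat = 1 := one_pow _
        have h2 : (1 : ℤ) * ((m * ((n * p : ℕ) : ℤ)).toNat : ℤ) = m * (n * p : ℕ) := by
          omega
        rw [h1, h2]
      rw [← hpowN, ← zpow_natCast]
      congr 1
      omega
  have hzinf : ¬ IsOfFinOrder z := by
    intro hfin
    obtain ⟨q, hq1, hq⟩ := hfin.exists_pow_eq_one
    have h0 := congrArg SemidirectProduct.rightHom hq
    rw [map_pow, map_one] at h0
    have h2 : (Multiplicative.ofAdd (m * ((n * p : ℕ) : ℤ))) ^ q = 1 := h0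
    rw [← ofAdd_nsmul, nsmul_eq_mul] at h2
    have h3 : (q : ℤ) * (m * ((n * p : ℕ) : ℤ)) = 0 := by
      exact_mod_cast congrArg Multiplicative.toAdd h2
    have hq0 : (1 : ℤ) ≤ q := by exact_mod_cast hq1
    nlinarith
  have hinj : Function.Injective fun j : ℤ => z ^ j :=
    injective_zpow_iff_not_isOfFinOrder.mpr hzinf
  refine Infinite.of_injective
    (fun j : ℤ => (⟨z ^ j, Subgroup.zpow_mem _ hzmem j⟩ :
      ↥(Subgroup.zpowers x ⊓ Subgroup.zpowers
        (⟨1, Multiplicative.ofAdd 1⟩ : T ⋊[zpowersHom (MulAut T) θ] Multiplicative ℤ)))) ?_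
  intro a b hab
  exact hinj (congrArg Subtype.val hab)
end
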